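/- Let 𝒟 be a finite set of ordered pairs (A,B) of k-subsets of [n]. The system of linear inequalities {Σ_{b∈B} x_b - Σ_{a∈A} x_a ≤ -1 for all (A,B) ∈ 𝒟, x ≥ 0} has a solution x ∈ ℝ^n if and only if there do NOT exist finite multisets 𝒜 = {A₁,...,A_m} and ℬ = {B₁,...,B_m} (m ≥ 1) with (A_j, B_j) ∈ 𝒟 for all j, such that every player i ∈ [n] appears the same number of times across the A_j's as across the B_j's. -/

import Mathlib

open Classical

lemma exists_between_finsets {F : Type*} [Field F] [LinearOrder F] [IsStrictOrderedRing F] (L U : Finset F)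
    (h : ∀ l ∈ L, ∀ u ∈ U, l < u) :
    ∃ t, (∀ l ∈ L, l < t) ∧ ∀ u ∈ U, t < u := by
  rcases L.eq_empty_or_nonempty with hL | hL
  · rcases U.eq_empty_or_nonempty with hU | hU
    · exact ⟨0, by simp [hL], by simp [hU]⟩
    · exact ⟨U.min' hU - 1, by simp [hL], fun u hu => by
        have := U.min'_le u hu; linarith⟩
  · rcases U.eq_empty_or_nonempty with hU | hU
    · exact ⟨L.max' hL + 1, fun l hl => by have := L.le_max' l hl; linarith, by simp [hU]⟩
    · have key : L.max' hL < U.min' hU := h _ (L.max'_mem hL) _ (U.min'_mem hU)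
      refine ⟨(L.max' hL + U.min' hU) / 2, fun l hl => ?_, fun u hu => ?_⟩
      · have := L.le_max' l hl; linarith
      · have := U.min'_le u hu; linarith

theorem motzkin {F : Type*} [Field F] [LinearOrder F] [IsStrictOrderedRing F] :
    ∀ (n : ℕ) (ι : Type) [Fintype ι] (a : ι → Fin n → F) (b : ι → F),
    (∃ x : Fin n → F, ∀ i, ∑ j, a i j * x j < b i) ∨
    (∃ l : ι → F, (∀ i, 0 ≤ l i) ∧ (∃ i, l i ≠ 0) ∧
      (∀ j, ∑ i, l i * a i j = 0) ∧ ∑ i, l i * b i ≤ 0) := by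
  intro n
  induction n with
  | zero =>
    intro ι _ a b
    by_cases h : ∀ i, 0 < b i
    · exact Or.inl ⟨fun _ => 0, fun i => by simpa using h i⟩
    · push_neg at h
      obtain ⟨i₀, hi₀⟩ := h
      refine Or.inr ⟨fun i => if i = i₀ then 1 else 0, fun i => by positivity,
        ⟨i₀, by simp⟩, fun j => j.elim0, ?_⟩
      simp only [ite_mul, one_mul, zero_mul]
      simpa using hi₀
  | succ n IH =>
    intro ι _ a b
    set c : ι → F := fun i => a i 0 with hc
    set a'' : ι → Fin n → F := fun i j => a i j.succ with ha''
    let κ : Type := {i : ι // c i = 0} ⊕ ({i : ι // 0 < c i} × {i : ι // c i < 0})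
    haveI : Fintype κ := Fintype.ofFinite κ
    set A : κ → Fin n → F := Sum.elim (fun z => a'' z.1)
      (fun pq => fun m => c pq.1.1 * a'' pq.2.1 m - c pq.2.1 * a'' pq.1.1 m) with hA
    set B : κ → F := Sum.elim (fun z => b z.1)
      (fun pq => c pq.1.1 * b pq.2.1 - c pq.2.1 * b pq.1.1) with hB
    rcases IH κ A B with ⟨x', hx'⟩ | ⟨l', hl'0, ⟨k₀, hk₀⟩, hl'a, hl'b⟩
    · -- feasible case
      set s : ι → F := fun i => ∑ m, a'' i m * x' m with hs
      have hZ : ∀ i, c i = 0 → s i < b i := fun i h => by simpa [A, B, s] using hx' (Sum.inl ⟨i, h⟩)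
      have hPN : ∀ (p q : ι), 0 < c p → c q < 0 →
          c p * s q - c q * s p < c p * b q - c q * b p := by
        intro p q hp hq
        have h2 := hx' (Sum.inr (⟨p, hp⟩, ⟨q, hq⟩))
        simp only [hA, hB, Sum.elim_inr] at h2
        calc c p * s q - c q * s p
            = ∑ m, (c p * a'' q m - c q * a'' p m) * x' m := by
              simp only [s, Finset.mul_sum, ← Finset.sum_sub_distrib]
              exact Finset.sum_congr rfl fun m _ => by ring
          _ < c p * b q - c q * b p := h2
      obtain ⟨t, htL, htU⟩ := exists_between_finsets
        ((Finset.univ.filter (fun i => c i < 0)).image (fun i => (b i - s i) / c i))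
        ((Finset.univ.filter (fun i => 0 < c i)).image (fun i => (b i - s i) / c i))
        (by
          intro l hl u hu
          simp only [Finset.mem_image, Finset.mem_filter, Finset.mem_univ, true_and] at hl hu
          obtain ⟨q, hq, rfl⟩ := hl
          obtain ⟨p, hp, rfl⟩ := hu
          have key := hPN p q hp hq
          rw [div_lt_iff_of_neg hq, show (b p - s p) / c p * c q = (b p - s p) * c q / c p by
            ring, div_lt_iff₀ hp]
          nlinarith [key])
      refine Or.inl ⟨Fin.cons t x', fun i => ?_⟩
      have hsum : ∑ j, a i j * (Fin.cons t x' : Fin (n+1) → F) j = c i * t + s i := by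
        rw [Fin.sum_univ_succ]
        simp [s, a'', c]
      rw [hsum]
      rcases lt_trichotomy (c i) 0 with h0 | h0 | h0
      · have := htL ((b i - s i) / c i) (Finset.mem_image_of_mem _ (by simp [h0]))
        rw [div_lt_iff_of_neg h0] at this
        linarith
      · have := hZ i h0
        rw [h0]; linarith
      · have := htU ((b i - s i) / c i) (Finset.mem_image_of_mem _ (by simp [h0]))
        rw [lt_div_iff₀ h0] at this
        linarith
    · -- infeasible case
      set coeff : κ → ι → F := Sum.elim (fun z i => if z.1 = i then 1 else 0)
        (fun pq i => (if pq.2.1 = i then c pq.1.1 else 0) +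
          (if pq.1.1 = i then -(c pq.2.1) else 0)) with hcoeff
      have hcoeff0 : ∀ k i, 0 ≤ coeff k i := by
        rintro (z | pq) i
        · simp only [hcoeff, Sum.elim_inl]; positivity
        · simp only [hcoeff, Sum.elim_inr]
          have h1 := pq.1.2
          have h2 := pq.2.2
          refine add_nonneg ?_ ?_ <;> split <;> linarith
      have hcomb : ∀ g : ι → F, ∀ k : κ, ∑ i, coeff k i * g i =
          Sum.elim (fun z : {i : ι // c i = 0} => g z.1)
            (fun pq : {i : ι // 0 < c i} × {i : ι // c i < 0} =>
              c pq.1.1 * g pq.2.1 - c pq.2.1 * g pq.1.1) k := by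
        rintro g (z | pq)
        · simp [hcoeff, Finset.sum_ite_eq]
        · simp only [hcoeff, Sum.elim_inl, Sum.elim_inr, add_mul, Finset.sum_add_distrib,
            ite_mul, zero_mul, Finset.sum_ite_eq, Finset.mem_univ, if_true]
          ring
      set l : ι → F := fun i => ∑ k, l' k * coeff k i with hl
      have hswap : ∀ g : ι → F, ∑ i, l i * g i = ∑ k, l' k * ∑ i, coeff k i * g i := by
        intro g
        simp only [hl, Finset.sum_mul, Finset.mul_sum]
        rw [Finset.sum_comm]
        congr 1; ext k; congr 1; ext i; ring
      refine Or.inr ⟨l, fun i => Finset.sum_nonneg fun k _ =>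
        mul_nonneg (hl'0 k) (hcoeff0 k i), ?_, ?_, ?_⟩
      · -- nonzero
        have hk₀pos : 0 < l' k₀ := lt_of_le_of_ne (hl'0 k₀) (Ne.symm hk₀)
        have hgen : ∀ i₀ : ι, 0 < coeff k₀ i₀ → ∃ i, l i ≠ 0 := by
          intro i₀ hco
          refine ⟨i₀, ne_of_gt ?_⟩
          exact Finset.sum_pos' (fun k _ => mul_nonneg (hl'0 k) (hcoeff0 k i₀))
            ⟨k₀, Finset.mem_univ _, mul_pos hk₀pos hco⟩
        rcases k₀ with z | pq
        · exact hgen z.1 (by simp [hcoeff])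
        · refine hgen pq.2.1 ?_
          have h1 := pq.1.2
          have h2 := pq.2.2
          simp only [hcoeff, Sum.elim_inr, if_pos rfl, if_true]
          have : (0:F) ≤ if pq.1.1 = pq.2.1 then -(c pq.2.1) else 0 := by
            split <;> linarith
          linarith
      · -- sum against a is zero
        intro j
        rw [hswap]
        induction j using Fin.cases with
        | zero =>
          have : ∀ k : κ, ∑ i, coeff k i * (fun i => a i 0) i = 0 := by
            intro k
            rw [hcomb]
            rcases k with z | pq
            · exact z.2
            · simp only [Sum.elim_inr]; ring
          simp only [this, mul_zero, Finset.sum_const_zero]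
        | succ m =>
          have : ∀ k : κ, ∑ i, coeff k i * (fun i => a i m.succ) i = A k m := by
            intro k
            rw [hcomb]
            rcases k with z | pq <;> simp [hA, a'']
          calc ∑ k, l' k * ∑ i, coeff k i * a i m.succ = ∑ k, l' k * A k m := by
                congr 1; ext k; rw [this k]
            _ = 0 := hl'a m
      · -- sum against b
        rw [hswap]
        have : ∀ k : κ, ∑ i, coeff k i * b i = B k := by
          intro k
          rw [hcomb]
        calc ∑ k, l' k * ∑ i, coeff k i * b i = ∑ k, l' k * B k := by
              congr 1; ext k; rw [this k]
          _ ≤ 0 := hl'b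

lemma nat_clear {ι : Type} [Fintype ι] (l : ι → ℚ) (h0 : ∀ i, 0 ≤ l i) :
    ∃ (c : ι → ℕ) (D : ℕ), 0 < D ∧ ∀ i, (c i : ℚ) = l i * D := by
  classical
  set D : ℕ := ∏ j, (l j).den with hD
  have hDpos : 0 < D := Finset.prod_pos fun j _ => (l j).pos
  refine ⟨fun i => (l i).num.toNat * (D / (l i).den), D, hDpos, fun i => ?_⟩
  have hdvd : (l i).den ∣ D := Finset.dvd_prod_of_mem _ (Finset.mem_univ i)
  have hnum : ((l i).num.toNat : ℚ) = (l i).num := by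
    have : 0 ≤ (l i).num := Rat.num_nonneg.mpr (h0 i)
    exact_mod_cast congrArg (fun z : ℤ => (z : ℚ)) (Int.toNat_of_nonneg this)
  have hden : ((l i).den : ℕ) * (D / (l i).den) = D := Nat.mul_div_cancel' hdvd
  have hld : l i * (l i).den = (l i).num := by
    rw [mul_comm, Rat.den_mul_eq_num]
  calc ((((l i).num.toNat * (D / (l i).den)) : ℕ) : ℚ)
      = ((l i).num : ℚ) * ((D / (l i).den : ℕ) : ℚ) := by push_cast [hnum]; ring
    _ = (l i * (l i).den) * ((D / (l i).den : ℕ) : ℚ) := by rw [hld]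
    _ = l i * (((l i).den * (D / (l i).den) : ℕ) : ℚ) := by push_cast; ring
    _ = l i * D := by rw [hden]

lemma count_sigma {ι : Type} [Fintype ι] (c : ι → ℕ) (P : ι → Prop) [DecidablePred P] :
    (Finset.univ.filter (fun s : Σ i : ι, Fin (c i) => P s.1)).card =
    ∑ i, if P i then c i else 0 := by
  classical
  rw [Finset.card_filter, ← Finset.univ_sigma_univ, Finset.sum_sigma]
  refine Finset.sum_congr rfl fun i _ => ?_
  by_cases hP : P i <;> simp [hP]

lemma filter_equiv_card {α β : Type} [Fintype α] [Fintype β] (e : α ≃ β) (P : β → Prop)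
    [DecidablePred P] :
    (Finset.univ.filter fun a => P (e a)).card = (Finset.univ.filter P).card := by
  apply Finset.card_bij (fun a _ => e a)
  · intro a ha
    simp only [Finset.mem_filter, Finset.mem_univ, true_and] at ha ⊢
    exact ha
  · intro a _ b _ h
    exact e.injective h
  · intro b hb
    simp only [Finset.mem_filter, Finset.mem_univ, true_and] at hb
    exact ⟨e.symm b, by simp [hb], by simp⟩

open Classical in
/-- Farkas-type characterization of additive representability:
the system Σ_{b∈B} x_b − Σ_{a∈A} x_a ≤ −1 ((A,B) ∈ 𝒟), x ≥ 0 is feasible iff there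
is no nonempty finite collection of pairs from 𝒟 in which every player appears
equally often on the left and on the right. -/
theorem stmt12 (n k : ℕ)
    (𝒟 : Finset (Finset (Fin n) × Finset (Fin n)))
    (hcard : ∀ p ∈ 𝒟, p.1.card = k ∧ p.2.card = k) :
    (∃ x : Fin n → ℝ, (∀ i, 0 ≤ x i) ∧
      ∀ p ∈ 𝒟, (∑ b ∈ p.2, x b) - (∑ a ∈ p.1, x a) ≤ -1) ↔
    ¬ (∃ (m : ℕ) (f : Fin m → Finset (Fin n) × Finset (Fin n)),
        0 < m ∧ (∀ j, f j ∈ 𝒟) ∧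
        ∀ i : Fin n,
          (Finset.univ.filter (fun j : Fin m => i ∈ (f j).1)).card =
          (Finset.univ.filter (fun j : Fin m => i ∈ (f j).2)).card) := by
  classical
  constructor
  · rintro ⟨x, hx0, hx⟩ ⟨m, f, hm, hf, hcount⟩
    have hswap : ∀ g : Fin m → Finset (Fin n),
        ∑ j, ∑ b ∈ g j, x b =
        ∑ i, ((Finset.univ.filter fun j => i ∈ g j).card : ℝ) * x i := by
      intro g
      have h1 : ∀ j, ∑ b ∈ g j, x b = ∑ i, if i ∈ g j then x i else 0 := by
        intro j
        rw [Finset.sum_ite_mem, Finset.univ_inter]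
      simp only [h1]
      rw [Finset.sum_comm]
      refine Finset.sum_congr rfl fun i _ => ?_
      rw [Finset.sum_ite, Finset.sum_const, Finset.sum_const_zero, add_zero, nsmul_eq_mul]
    have hS : ∑ j, ((∑ b ∈ (f j).2, x b) - ∑ a ∈ (f j).1, x a) = 0 := by
      rw [Finset.sum_sub_distrib, hswap (fun j => (f j).2), hswap (fun j => (f j).1)]
      rw [sub_eq_zero]
      exact Finset.sum_congr rfl fun i _ => by rw [hcount i]
    have hle : ∑ j, ((∑ b ∈ (f j).2, x b) - ∑ a ∈ (f j).1, x a) ≤ ∑ _j : Fin m, (-1 : ℝ) :=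
      Finset.sum_le_sum fun j _ => hx (f j) (hf j)
    rw [hS, Finset.sum_const, Finset.card_univ, Fintype.card_fin, nsmul_eq_mul] at hle
    have : (1 : ℝ) ≤ m := by exact_mod_cast hm
    linarith
  · intro hno
    rcases motzkin (F := ℚ) n ↥𝒟
        (fun p j => (if j ∈ (p : Finset (Fin n) × Finset (Fin n)).2 then (1:ℚ) else 0) -
          (if j ∈ (p : Finset (Fin n) × Finset (Fin n)).1 then (1:ℚ) else 0))
        (fun _ => -1) with
      ⟨x₀, hx₀⟩ | ⟨l, hl0, hlne, hla, hlb⟩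
    · have hind : ∀ (S : Finset (Fin n)) (y : Fin n → ℚ),
          ∑ j, (if j ∈ S then (1:ℚ) else 0) * y j = ∑ j ∈ S, y j := by
        intro S y
        simp only [ite_mul, one_mul, zero_mul]
        rw [Finset.sum_ite_mem, Finset.univ_inter]
      set C : ℚ := ∑ i, |x₀ i| with hC
      refine ⟨fun i => ((x₀ i + C : ℚ) : ℝ), fun i => ?_, fun p hp => ?_⟩
      · have h1 : |x₀ i| ≤ C := Finset.single_le_sum (f := fun i => |x₀ i|)
          (fun i _ => abs_nonneg _) (Finset.mem_univ i)
        have h2 : -x₀ i ≤ |x₀ i| := neg_le_abs _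
        have h3 : (0:ℚ) ≤ x₀ i + C := by linarith
        show (0:ℝ) ≤ ((x₀ i + C : ℚ) : ℝ)
        exact_mod_cast h3
      · have h := hx₀ ⟨p, hp⟩
        simp only [sub_mul, Finset.sum_sub_distrib, hind] at h
        have hsh : (∑ b ∈ p.2, (x₀ b + C)) - ∑ a ∈ p.1, (x₀ a + C) =
            (∑ b ∈ p.2, x₀ b) - ∑ a ∈ p.1, x₀ a := by
          rw [Finset.sum_add_distrib, Finset.sum_add_distrib, Finset.sum_const,
            Finset.sum_const, (hcard p hp).1, (hcard p hp).2]
          ring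
        have : (∑ b ∈ p.2, (x₀ b + C)) - ∑ a ∈ p.1, (x₀ a + C) ≤ -1 := by
          rw [hsh]; linarith
        calc (∑ b ∈ p.2, ((x₀ b + C : ℚ) : ℝ)) - ∑ a ∈ p.1, ((x₀ a + C : ℚ) : ℝ)
            = (((∑ b ∈ p.2, (x₀ b + C)) - ∑ a ∈ p.1, (x₀ a + C) : ℚ) : ℝ) := by push_cast; ring
          _ ≤ -1 := by exact_mod_cast this
    · exfalso
      apply hno
      obtain ⟨cN, D, hD, hcD⟩ := nat_clear l hl0
      -- key count identity over ℕ
      have hkey : ∀ j : Fin n,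
          (∑ p : ↥𝒟, if j ∈ (p : Finset (Fin n) × Finset (Fin n)).1 then cN p else 0) =
          (∑ p : ↥𝒟, if j ∈ (p : Finset (Fin n) × Finset (Fin n)).2 then cN p else 0) := by
        intro j
        have h := hla j
        have hQ : (∑ p : ↥𝒟, if j ∈ (p : Finset (Fin n) × Finset (Fin n)).1
              then ((cN p : ℚ)) else 0) =
            (∑ p : ↥𝒟, if j ∈ (p : Finset (Fin n) × Finset (Fin n)).2 then ((cN p : ℚ)) else 0) := by
          have h2 : ∑ p : ↥𝒟, (cN p : ℚ) *
              ((if j ∈ (p : Finset (Fin n) × Finset (Fin n)).2 then (1:ℚ) else 0) -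
                (if j ∈ (p : Finset (Fin n) × Finset (Fin n)).1 then (1:ℚ) else 0)) = 0 := by
            calc ∑ p : ↥𝒟, (cN p : ℚ) * _ = (D : ℚ) * ∑ p : ↥𝒟, l p *
                ((if j ∈ (p : Finset (Fin n) × Finset (Fin n)).2 then (1:ℚ) else 0) -
                  (if j ∈ (p : Finset (Fin n) × Finset (Fin n)).1 then (1:ℚ) else 0)) := by
                  rw [Finset.mul_sum]
                  exact Finset.sum_congr rfl fun p _ => by rw [hcD p]; ring
              _ = 0 := by rw [h, mul_zero]
          have h3 : (∑ p : ↥𝒟, if j ∈ (p : Finset (Fin n) × Finset (Fin n)).2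
                then ((cN p : ℚ)) else 0) -
              (∑ p : ↥𝒟, if j ∈ (p : Finset (Fin n) × Finset (Fin n)).1
                then ((cN p : ℚ)) else 0) = 0 := by
            rw [← Finset.sum_sub_distrib, ← h2]
            refine Finset.sum_congr rfl fun p _ => ?_
            split <;> split <;> simp_all <;> ring
          linarith [h3]
        exact_mod_cast hQ
      obtain ⟨p₀, hp₀⟩ := hlne
      have hlp₀ : 0 < l p₀ := lt_of_le_of_ne (hl0 p₀) (Ne.symm hp₀)
      have hcp₀ : 0 < cN p₀ := by
        have : (0:ℚ) < (cN p₀ : ℚ) := by rw [hcD p₀]; positivity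
        exact_mod_cast this
      have hmpos : 0 < Fintype.card (Σ p : ↥𝒟, Fin (cN p)) :=
        Fintype.card_pos_iff.mpr ⟨⟨p₀, ⟨0, hcp₀⟩⟩⟩
      set e : Fin (Fintype.card (Σ p : ↥𝒟, Fin (cN p))) ≃ (Σ p : ↥𝒟, Fin (cN p)) :=
        (Fintype.equivFin (Σ p : ↥𝒟, Fin (cN p))).symm with he
      refine ⟨Fintype.card (Σ p : ↥𝒟, Fin (cN p)),
        fun j => ((e j).1 : Finset (Fin n) × Finset (Fin n)), hmpos,
        fun j => (e j).1.2, fun i => ?_⟩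
      have h1 := filter_equiv_card e (fun s : Σ p : ↥𝒟, Fin (cN p) => i ∈ (s.1 : Finset (Fin n) × Finset (Fin n)).1)
      have h2 := filter_equiv_card e (fun s : Σ p : ↥𝒟, Fin (cN p) => i ∈ (s.1 : Finset (Fin n) × Finset (Fin n)).2)
      have c1 := count_sigma (ι := ↥𝒟) cN
        (fun p => i ∈ (p : Finset (Fin n) × Finset (Fin n)).1)
      have c2 := count_sigma (ι := ↥𝒟) cN
        (fun p => i ∈ (p : Finset (Fin n) × Finset (Fin n)).2)
      rw [h1, h2]
      exact c1.trans ((hkey i).trans c2.symm)
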